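/- Let G be a finite group and N a proper subgroup of G (not necessarily normal). Then M'_{G,N} = - Σ_{C ≤ N, C cyclic} φ(|C|) - Σ_{Y < G, Y ≰ N} M'_{Y, Y∩N}, where the first sum runs over all cyclic subgroups C of N, φ is the Euler totient function, and the second sum runs over all proper subgroups Y of G not contained in N. -/
import Mathlib

open scoped Classical Pointwise

noncomputable instance (G : Type*) [Group G] [Finite G] : Fintype (Subgroup G) :=
  Fintype.ofFinite _

/-- The Möbius function of the subgroup lattice of a finite group `G`, defined as the
matrix inverse of the zeta matrix whose `(K, D)` entry is `1` if `K ≤ D` and `0` otherwise. -/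
noncomputable def subgroupMu (G : Type*) [Group G] [Finite G] :
    Matrix (Subgroup G) (Subgroup G) ℚ :=
  (Matrix.of fun K D : Subgroup G => if K ≤ D then (1 : ℚ) else 0)⁻¹

/-- `M'_{G,H} = Σ_{X ≤ H} |X| · μ(X, G)` where `μ` is the Möbius function of the subgroup
lattice of `G`. -/
noncomputable def Mprime (G : Type*) [Group G] [Finite G] (H : Subgroup G) : ℚ :=
  ∑ X : Subgroup G, if X ≤ H then (Nat.card X : ℚ) * subgroupMu G X ⊤ else 0

open Finset IncidenceAlgebra

set_option linter.unusedSectionVars false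

noncomputable instance (priority := 10) myLFO (P : Type*) [PartialOrder P] [Fintype P] :
    LocallyFiniteOrder P := Fintype.toLocallyFiniteOrder

section Poset
variable {P : Type*} [PartialOrder P] [Fintype P]

lemma sum_mu_le (a c : P) :
    ∑ b : P, (if b ≤ c then mu ℚ a b else 0) = if a = c then (1 : ℚ) else 0 := by
  have h : (mu ℚ * zeta ℚ : IncidenceAlgebra ℚ P) a c = (1 : IncidenceAlgebra ℚ P) a c := by
    rw [mu_mul_zeta]
  rw [mul_apply, one_apply] at h
  calc ∑ b : P, (if b ≤ c then mu ℚ a b else 0)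
      = ∑ b : P, mu ℚ a b * zeta ℚ b c := by
        refine Finset.sum_congr rfl fun b _ => ?_
        rw [zeta_apply]; split <;> simp
    _ = ∑ b ∈ Finset.Icc a c, mu ℚ a b * zeta ℚ b c := by
        refine (Finset.sum_subset (Finset.subset_univ _) fun b _ hb => ?_).symm
        rw [Finset.mem_Icc] at hb
        by_cases hab : a ≤ b
        · have : ¬ b ≤ c := fun h' => hb ⟨hab, h'⟩
          rw [zeta_apply, if_neg this, mul_zero]
        · rw [apply_eq_zero_of_not_le hab, zero_mul]
    _ = if a = c then 1 else 0 := h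

lemma sum_mu_ge (a c : P) :
    ∑ b : P, (if a ≤ b then mu ℚ b c else 0) = if a = c then (1 : ℚ) else 0 := by
  have h : (zeta ℚ * mu ℚ : IncidenceAlgebra ℚ P) a c = (1 : IncidenceAlgebra ℚ P) a c := by
    rw [zeta_mul_mu]
  rw [mul_apply, one_apply] at h
  calc ∑ b : P, (if a ≤ b then mu ℚ b c else 0)
      = ∑ b : P, zeta ℚ a b * mu ℚ b c := by
        refine Finset.sum_congr rfl fun b _ => ?_
        rw [zeta_apply]; split <;> simp
    _ = ∑ b ∈ Finset.Icc a c, zeta ℚ a b * mu ℚ b c := by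
        refine (Finset.sum_subset (Finset.subset_univ _) fun b _ hb => ?_).symm
        rw [Finset.mem_Icc] at hb
        by_cases hab : a ≤ b
        · have : ¬ b ≤ c := fun h' => hb ⟨hab, h'⟩
          rw [apply_eq_zero_of_not_le this, mul_zero]
        · rw [zeta_apply, if_neg hab, zero_mul]
    _ = if a = c then 1 else 0 := h

lemma zeta_inv_eq :
    (Matrix.of fun a b : P => if a ≤ b then (1 : ℚ) else 0)⁻¹ =
      Matrix.of fun a b : P => mu ℚ a b := by
  apply Matrix.inv_eq_right_inv
  ext a c
  simp only [Matrix.mul_apply, Matrix.of_apply, Matrix.one_apply, ite_mul, one_mul, zero_mul]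
  exact sum_mu_ge a c

end Poset

lemma mu_orderEmbedding {Q P : Type*} [PartialOrder Q] [Fintype Q] [PartialOrder P] [Fintype P]
    (f : Q ↪o P) (hf : ∀ ⦃p : P⦄ ⦃q : Q⦄, p ≤ f q → ∃ x, f x = p) (a b : Q) :
    (mu ℚ a b : ℚ) = mu ℚ (f a) (f b) := by
  have key : (Matrix.of fun a b : Q => if a ≤ b then (1 : ℚ) else 0) *
      (Matrix.of fun a b : Q => (mu ℚ (f a) (f b) : ℚ)) = 1 := by
    ext a c
    simp only [Matrix.mul_apply, Matrix.of_apply, Matrix.one_apply, ite_mul, one_mul, zero_mul]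
    calc ∑ b : Q, (if a ≤ b then (mu ℚ (f b) (f c) : ℚ) else 0)
        = ∑ b : Q, (if f a ≤ f b then (mu ℚ (f b) (f c) : ℚ) else 0) := by
          refine Finset.sum_congr rfl fun b _ => ?_
          rw [f.le_iff_le]
      _ = ∑ p ∈ Finset.univ.image f, (if f a ≤ p then (mu ℚ p (f c) : ℚ) else 0) := by
          rw [Finset.sum_image (fun x _ y _ h => f.injective h)]
      _ = ∑ p : P, (if f a ≤ p then (mu ℚ p (f c) : ℚ) else 0) := by
          refine Finset.sum_subset (Finset.subset_univ _) fun p _ hp => ?_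
          have h0 : (mu ℚ p (f c) : ℚ) = 0 := by
            refine apply_eq_zero_of_not_le (fun hle => ?_) _
            obtain ⟨x, hx⟩ := hf hle
            exact hp (Finset.mem_image.2 ⟨x, Finset.mem_univ x, hx⟩)
          simp [h0]
      _ = if f a = f c then 1 else 0 := sum_mu_ge (f a) (f c)
      _ = if a = c then 1 else 0 := by simp [f.injective.eq_iff]
  have h1 := Matrix.inv_eq_right_inv key
  have h2 := (zeta_inv_eq (P := Q)).symm.trans h1
  simpa using (congrFun (congrFun h2 a) b)

section GroupPart
variable {G : Type*} [Group G] [Finite G]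

lemma isCyclic_zpowers (g : G) : IsCyclic ↥(Subgroup.zpowers g) := by
  refine ⟨⟨g, Subgroup.mem_zpowers g⟩, fun x => ?_⟩
  obtain ⟨n, hn⟩ := Subgroup.mem_zpowers_iff.1 x.2
  exact Subgroup.mem_zpowers_iff.2 ⟨n, Subtype.ext (by simpa using hn)⟩

lemma card_subgroup_eq_sum_totient (N : Subgroup G) :
    Nat.card N =
      ∑ C : Subgroup G, if C ≤ N ∧ IsCyclic ↥C then Nat.totient (Nat.card C) else 0 := by
  haveI : Fintype G := Fintype.ofFinite G
  have h1 : Nat.card N = (Finset.univ.filter fun g : G => g ∈ N).card := by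
    rw [Nat.card_eq_fintype_card, Fintype.card_subtype]
  rw [h1, Finset.card_eq_sum_card_fiberwise
    (f := fun g : G => Subgroup.zpowers g) (t := Finset.univ) (fun x _ => Finset.mem_univ _)]
  refine Finset.sum_congr rfl fun C _ => ?_
  by_cases hC : C ≤ N ∧ IsCyclic ↥C
  · rw [if_pos hC]
    obtain ⟨hCN, hCyc⟩ := hC
    have hfil : ((Finset.univ.filter fun g : G => g ∈ N).filter
        fun g => Subgroup.zpowers g = C) = Finset.univ.filter fun g : G => Subgroup.zpowers g = C := by
      ext g
      simp only [Finset.mem_filter, Finset.mem_univ, true_and]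
      refine ⟨fun h => h.2, fun h => ⟨hCN (h ▸ Subgroup.mem_zpowers g), h⟩⟩
    rw [hfil]
    have hcard : (Finset.univ.filter fun g : G => Subgroup.zpowers g = C).card
        = (Finset.univ.filter fun h : ↥C => orderOf h = Fintype.card ↥C).card := by
      refine Finset.card_bij
        (fun g hg => (⟨g, by
          have : Subgroup.zpowers g = C := (Finset.mem_filter.1 hg).2
          exact this ▸ Subgroup.mem_zpowers g⟩ : ↥C)) ?_ ?_ ?_
      · intro g hg
        have hzp : Subgroup.zpowers g = C := (Finset.mem_filter.1 hg).2
        simp only [Finset.mem_filter, Finset.mem_univ, true_and]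
        rw [Subgroup.orderOf_mk, ← Nat.card_zpowers, hzp, Nat.card_eq_fintype_card]
      · intro g hg g' hg' h
        simpa using congrArg (Subtype.val) h
      · intro h ht
        have hord : orderOf h = Fintype.card ↥C := (Finset.mem_filter.1 ht).2
        refine ⟨(h : G), ?_, rfl⟩
        simp only [Finset.mem_filter, Finset.mem_univ, true_and]
        refine Subgroup.eq_of_le_of_card_ge (Subgroup.zpowers_le.2 h.2) ?_
        rw [Nat.card_zpowers, Subgroup.orderOf_coe, hord, Nat.card_eq_fintype_card]
    rw [hcard]
    rw [IsCyclic.card_orderOf_eq_totient (dvd_refl _), Nat.card_eq_fintype_card]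
  · rw [if_neg hC, Finset.card_eq_zero, Finset.filter_eq_empty_iff]
    intro g hg
    rw [Finset.mem_filter] at hg
    intro hzp
    exact hC ⟨hzp ▸ Subgroup.zpowers_le.2 hg.2, hzp ▸ isCyclic_zpowers g⟩

noncomputable def mapEmb (Y : Subgroup G) : Subgroup ↥Y ↪o Subgroup G where
  toFun := fun X => X.map Y.subtype
  inj' := Subgroup.map_injective (Subgroup.subtype_injective Y)
  map_rel_iff' := Subgroup.map_le_map_iff_of_injective (Subgroup.subtype_injective Y)

lemma mapEmb_lower (Y : Subgroup G) ⦃p : Subgroup G⦄ ⦃q : Subgroup ↥Y⦄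
    (h : p ≤ mapEmb Y q) : ∃ x, mapEmb Y x = p := by
  have hpY : p ≤ Y := h.trans (Subgroup.map_subtype_le q)
  exact ⟨p.subgroupOf Y, by
    show (p.subgroupOf Y).map Y.subtype = p
    rw [Subgroup.subgroupOf_map_subtype, inf_eq_left.2 hpY]⟩

lemma mapEmb_top (Y : Subgroup G) : mapEmb Y ⊤ = Y := by
  show (⊤ : Subgroup ↥Y).map Y.subtype = Y
  rw [← MonoidHom.range_eq_map, Subgroup.range_subtype]

end GroupPart

/-- For a finite group `G` and a proper subgroup `N`,
`M'_{G,N} = - Σ_{C ≤ N, C cyclic} φ(|C|) - Σ_{Y < G, Y ≰ N} M'_{Y, Y ∩ N}`,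
where in `M'_{Y, Y ∩ N}` the Möbius function of the subgroup lattice of `Y` is used. -/
theorem Mprime_recursion (G : Type*) [Group G] [Finite G]
    (N : Subgroup G) (hN : N ≠ ⊤) :
    Mprime G N =
      -(∑ C : Subgroup G,
          if C ≤ N ∧ IsCyclic ↥C then (Nat.totient (Nat.card C) : ℚ) else 0)
      - ∑ Y : Subgroup G,
          if Y ≠ ⊤ ∧ ¬ Y ≤ N then Mprime ↥Y (N.subgroupOf Y) else 0 := by
  set T : Subgroup G → ℚ :=
    fun Y => ∑ Z : Subgroup G, if Z ≤ N then (Nat.card Z : ℚ) * mu ℚ Z Y else 0 with hT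
  have hmuG : subgroupMu G = Matrix.of fun a b : Subgroup G => mu ℚ a b := zeta_inv_eq
  have htop : Mprime G N = T ⊤ := by
    unfold Mprime
    rw [hmuG]
    rfl
  have hY : ∀ Y : Subgroup G, Mprime ↥Y (N.subgroupOf Y) = T Y := by
    intro Y
    unfold Mprime
    have hmuY : subgroupMu ↥Y = Matrix.of fun a b : Subgroup ↥Y => mu ℚ a b := zeta_inv_eq
    rw [hmuY]
    have hstep : ∀ X : Subgroup ↥Y,
        (if X ≤ N.subgroupOf Y then (Nat.card X : ℚ) *
            (Matrix.of fun a b : Subgroup ↥Y => (mu ℚ a b : ℚ)) X ⊤ else 0)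
          = (fun Z : Subgroup G =>
              if Z ≤ N then (Nat.card Z : ℚ) * mu ℚ Z Y else 0) (mapEmb Y X) := by
      intro X
      have h1 : (mu ℚ X (⊤ : Subgroup ↥Y) : ℚ) = mu ℚ (mapEmb Y X) Y := by
        rw [mu_orderEmbedding (mapEmb Y) (mapEmb_lower Y) X ⊤, mapEmb_top]
      have h2 : (X ≤ N.subgroupOf Y) ↔ mapEmb Y X ≤ N := Subgroup.map_le_iff_le_comap.symm
      have h3 : (Nat.card X : ℚ) = (Nat.card (mapEmb Y X) : ℚ) := by
        rw [Nat.card_congr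
          (Subgroup.equivMapOfInjective X Y.subtype (Subgroup.subtype_injective Y)).toEquiv]
        rfl
      simp only [Matrix.of_apply]
      by_cases hX : X ≤ N.subgroupOf Y
      · rw [if_pos hX, if_pos (h2.1 hX), h1, h3]
      · rw [if_neg hX, if_neg (fun c => hX (h2.2 c))]
    calc ∑ X : Subgroup ↥Y, (if X ≤ N.subgroupOf Y then (Nat.card X : ℚ) *
            (Matrix.of fun a b : Subgroup ↥Y => (mu ℚ a b : ℚ)) X ⊤ else 0)
        = ∑ X : Subgroup ↥Y, (fun Z : Subgroup G =>
            if Z ≤ N then (Nat.card Z : ℚ) * mu ℚ Z Y else 0) (mapEmb Y X) :=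
          Finset.sum_congr rfl fun X _ => hstep X
      _ = ∑ Z ∈ Finset.univ.image (mapEmb Y),
            (if Z ≤ N then (Nat.card Z : ℚ) * mu ℚ Z Y else 0) := by
          rw [Finset.sum_image (fun x _ y _ h => (mapEmb Y).injective h)]
      _ = T Y := by
          refine Finset.sum_subset (Finset.subset_univ _) fun Z _ hZ => ?_
          have h0 : (mu ℚ Z Y : ℚ) = 0 := by
            refine apply_eq_zero_of_not_le (fun hle => ?_) _
            have hle' : Z ≤ mapEmb Y ⊤ := by rw [mapEmb_top]; exact hle
            obtain ⟨x, hx⟩ := mapEmb_lower Y hle'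
            exact hZ (Finset.mem_image.2 ⟨x, Finset.mem_univ x, hx⟩)
          simp [h0]
  have hsum : ∑ Y : Subgroup G, (if ¬ Y ≤ N then T Y else 0) = -(Nat.card N : ℚ) := by
    have step1 : ∑ Y : Subgroup G, (if ¬ Y ≤ N then T Y else 0)
        = ∑ Y : Subgroup G, ∑ Z : Subgroup G,
            (if ¬ Y ≤ N then (if Z ≤ N then (Nat.card Z : ℚ) * mu ℚ Z Y else 0) else 0) := by
      refine Finset.sum_congr rfl fun Y _ => ?_
      by_cases h : ¬ Y ≤ N
      · simp only [if_pos h, hT]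
      · simp only [if_neg h, Finset.sum_const_zero]
    rw [step1, Finset.sum_comm]
    have step2 : ∀ Z : Subgroup G,
        ∑ Y : Subgroup G,
            (if ¬ Y ≤ N then (if Z ≤ N then (Nat.card Z : ℚ) * mu ℚ Z Y else 0) else 0)
        = if Z = N then -(Nat.card N : ℚ) else 0 := by
      intro Z
      by_cases hZ : Z ≤ N
      · have hinner : ∑ Y : Subgroup G, (if ¬ Y ≤ N then (mu ℚ Z Y : ℚ) else 0)
            = -(if Z = N then (1 : ℚ) else 0) := by
          have hA : ∑ Y : Subgroup G, (mu ℚ Z Y : ℚ) = if Z = ⊤ then 1 else 0 := by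
            have := sum_mu_le Z (⊤ : Subgroup G)
            simpa using this
          have hB := sum_mu_le Z N
          have hsplitY : ∀ Y : Subgroup G,
              (if ¬ Y ≤ N then (mu ℚ Z Y : ℚ) else 0)
                = mu ℚ Z Y - (if Y ≤ N then (mu ℚ Z Y : ℚ) else 0) := by
            intro Y
            by_cases h : Y ≤ N <;> simp [h]
          rw [Finset.sum_congr rfl fun Y _ => hsplitY Y, Finset.sum_sub_distrib, hA, hB]
          have hZtop : Z ≠ ⊤ := fun h => hN (top_le_iff.1 (h ▸ hZ))
          rw [if_neg hZtop]
          ring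
        calc ∑ Y : Subgroup G,
              (if ¬ Y ≤ N then (if Z ≤ N then (Nat.card Z : ℚ) * mu ℚ Z Y else 0) else 0)
            = ∑ Y : Subgroup G,
              (Nat.card Z : ℚ) * (if ¬ Y ≤ N then (mu ℚ Z Y : ℚ) else 0) := by
              refine Finset.sum_congr rfl fun Y _ => ?_
              by_cases h : ¬ Y ≤ N <;> simp [h, hZ]
          _ = (Nat.card Z : ℚ) * (∑ Y : Subgroup G, (if ¬ Y ≤ N then (mu ℚ Z Y : ℚ) else 0)) :=
              (Finset.mul_sum _ _ _).symm
          _ = (Nat.card Z : ℚ) * (-(if Z = N then (1 : ℚ) else 0)) := by rw [hinner]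
          _ = if Z = N then -(Nat.card N : ℚ) else 0 := by
              by_cases h : Z = N
              · subst h; simp
              · simp [h]
      · have hZN : Z ≠ N := fun h => hZ (h ▸ le_refl N)
        rw [if_neg hZN]
        refine Finset.sum_eq_zero fun Y _ => ?_
        by_cases h : ¬ Y ≤ N <;> simp [h, hZ]
    rw [Finset.sum_congr rfl fun Z _ => step2 Z]
    simp
  have hsplit : ∑ Y : Subgroup G, (if ¬ Y ≤ N then T Y else 0)
      = T ⊤ + ∑ Y : Subgroup G, (if Y ≠ ⊤ ∧ ¬ Y ≤ N then T Y else 0) := by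
    have hpt : ∀ Y : Subgroup G, (if ¬ Y ≤ N then T Y else 0)
        = (if Y = ⊤ then T ⊤ else 0) + (if Y ≠ ⊤ ∧ ¬ Y ≤ N then T Y else 0) := by
      intro Y
      by_cases hYt : Y = ⊤
      · subst hYt
        have : ¬ (⊤ : Subgroup G) ≤ N := fun h => hN (top_le_iff.1 h)
        simp [this]
      · by_cases h : ¬ Y ≤ N <;> simp [hYt, h]
    rw [Finset.sum_congr rfl fun Y _ => hpt Y, Finset.sum_add_distrib]
    simp
  have hcyc : (Nat.card N : ℚ)
      = ∑ C : Subgroup G, if C ≤ N ∧ IsCyclic ↥C then (Nat.totient (Nat.card C) : ℚ) else 0 := by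
    rw [card_subgroup_eq_sum_totient N]
    push_cast
    refine Finset.sum_congr rfl fun C _ => ?_
    by_cases h : C ≤ N ∧ IsCyclic ↥C <;> simp [h]
  have hMsum : ∑ Y : Subgroup G,
      (if Y ≠ ⊤ ∧ ¬ Y ≤ N then Mprime ↥Y (N.subgroupOf Y) else 0)
      = ∑ Y : Subgroup G, (if Y ≠ ⊤ ∧ ¬ Y ≤ N then T Y else 0) := by
    refine Finset.sum_congr rfl fun Y _ => ?_
    by_cases h : Y ≠ ⊤ ∧ ¬ Y ≤ N <;> simp [h, hY Y]
  rw [htop, hMsum, ← hcyc]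
  have := hsplit.symm.trans hsum
  linarith
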